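/- If q ≥ Δ + 1, then the uniform distribution μ over the (nonempty) set of proper q-colorings of G is a stationary distribution of the Local Glauber dynamics: for every τ ∈ [q]^V, ∑_{σ ∈ [q]^V} μ(σ)·P(σ, τ) = μ(τ). -/

import Mathlib

open Finset

attribute [local instance] Classical.propDecidable

namespace LocalGlauber

variable {V : Type*} [Fintype V] [DecidableEq V]

/-- A coloring is proper if adjacent vertices get different colors. -/
def IsProper (G : SimpleGraph V) {q : ℕ} (σ : V → Fin q) : Prop :=
  ∀ ⦃x y : V⦄, G.Adj x y → σ x ≠ σ y

/-- The acceptance condition of the Local Glauber dynamics at node `v`, given the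
current coloring `σ` and the proposals `c` (with `c u = σ u` for unmarked nodes):
`c v ∉ ⋃_{u ∈ N(v)} {σ u, c u}` and `c u ∉ {σ v, c v}` for every neighbor `u`. -/
def Accept (G : SimpleGraph V) {q : ℕ} (σ c : V → Fin q) (v : V) : Prop :=
  ∀ u : V, G.Adj v u → c v ≠ σ u ∧ c v ≠ c u ∧ c u ≠ σ v ∧ c u ≠ c v

/-- One step of the Local Glauber dynamics, given proposals `c`
(nodes with `c v = σ v`, in particular unmarked nodes, never change state). -/
noncomputable def glauberStep (G : SimpleGraph V) {q : ℕ} (σ c : V → Fin q) : V → Fin q :=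
  fun v => if Accept G σ c v then c v else σ v

/-- Probability weight of the random choice `(m, c)`: each node is marked (`m v = true`)
independently with probability `γ`; a marked node proposes a uniform color in `[q]`;
an unmarked node proposes its current color. -/
noncomputable def glauberWeight {q : ℕ} (γ : ℝ) (σ : V → Fin q) (m : V → Bool)
    (c : V → Fin q) : ℝ :=
  ∏ v : V, (if m v then γ / q else if c v = σ v then 1 - γ else 0)

/-- Transition matrix of the Local Glauber dynamics. -/
noncomputable def P (G : SimpleGraph V) (q : ℕ) (γ : ℝ) (σ τ : V → Fin q) : ℝ :=
  ∑ m : V → Bool, ∑ c : V → Fin q,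
    if glauberStep G σ c = τ then glauberWeight γ σ m c else 0

/-- `t`-step iterate of the transition matrix. -/
noncomputable def Pt (G : SimpleGraph V) (q : ℕ) (γ : ℝ) : ℕ → (V → Fin q) → (V → Fin q) → ℝ
  | 0 => fun σ τ => if σ = τ then 1 else 0
  | t + 1 => fun σ τ => ∑ ρ : V → Fin q, Pt G q γ t σ ρ * P G q γ ρ τ

/-- Uniform distribution over the proper `q`-colorings of `G`. -/
noncomputable def uniformProper (G : SimpleGraph V) (q : ℕ) (σ : V → Fin q) : ℝ :=
  if IsProper G σ then
    1 / ((univ.filter (fun τ : V → Fin q => IsProper G τ)).card : ℝ)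
  else 0

/-- Total variation distance between two distributions on a finite set. -/
noncomputable def dTV {Ω : Type*} [Fintype Ω] (μ ν : Ω → ℝ) : ℝ :=
  (1 / 2) * ∑ x : Ω, |μ x - ν x|

end LocalGlauber

namespace LocalGlauber

set_option linter.unusedSectionVars false

-- AUX below
variable {V : Type*} [Fintype V] [DecidableEq V]
variable {G : SimpleGraph V} {q : ℕ} {σ τ : V → Fin q}

noncomputable def swapC (G : SimpleGraph V) {q : ℕ} (σ c : V → Fin q) : V → Fin q :=
  fun v => if Accept G σ c v then σ v else c v

lemma step_proper (hσ : IsProper G σ) (c : V → Fin q) :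
    IsProper G (glauberStep G σ c) := by
  intro x y hxy
  unfold glauberStep
  by_cases hx : Accept G σ c x <;> by_cases hy : Accept G σ c y
  · rw [if_pos hx, if_pos hy]; exact (hx y hxy).2.1
  · rw [if_pos hx, if_neg hy]; exact (hx y hxy).1
  · rw [if_neg hx, if_pos hy]; exact ((hy x hxy.symm).1).symm
  · rw [if_neg hx, if_neg hy]; exact hσ hxy

lemma accept_swap (hσ : IsProper G σ) (c : V → Fin q) (v : V) :
    Accept G (glauberStep G σ c) (swapC G σ c) v ↔ Accept G σ c v := by
  constructor
  · intro hB
    by_cases hv : Accept G σ c v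
    · exact hv
    intro u hadj
    have h1 := hB u hadj
    simp only [swapC, glauberStep, hv, if_false] at h1
    by_cases hu : Accept G σ c u
    · simp only [hu, if_true] at h1
      have h2 := hu v hadj.symm
      exact ⟨h1.2.1, h1.1, h2.1, h2.2.1⟩
    · simp only [hu, if_false] at h1
      exact ⟨h1.1, h1.2.1, h1.2.2.1, h1.2.2.2⟩
  · intro hv u hadj
    have h1 := hv u hadj
    have hvv : σ v ≠ σ u := hσ hadj
    simp only [swapC, glauberStep, hv, if_true]
    by_cases hu : Accept G σ c u
    · simp only [hu, if_true]
      exact ⟨(h1.2.2.1).symm, hvv, h1.1.symm, hvv.symm⟩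
    · simp only [hu, if_false]
      exact ⟨hvv, (h1.2.2.1).symm, h1.2.2.2, h1.2.2.1⟩

lemma step_swap (hσ : IsProper G σ) (c : V → Fin q) :
    glauberStep G (glauberStep G σ c) (swapC G σ c) = σ := by
  funext v
  by_cases hv : Accept G σ c v
  · rw [glauberStep, if_pos ((accept_swap hσ c v).mpr hv)]
    simp [swapC, hv]
  · rw [glauberStep, if_neg (fun h => hv ((accept_swap hσ c v).mp h))]
    simp [glauberStep, hv]

lemma swap_swap (hσ : IsProper G σ) (c : V → Fin q) :
    swapC G (glauberStep G σ c) (swapC G σ c) = c := by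
  funext v
  by_cases hv : Accept G σ c v
  · rw [swapC, if_pos ((accept_swap hσ c v).mpr hv)]
    simp [glauberStep, hv]
  · rw [swapC, if_neg (fun h => hv ((accept_swap hσ c v).mp h))]
    simp [swapC, hv]

lemma weight_swap (γ : ℝ) (m : V → Bool) (σ c : V → Fin q) :
    glauberWeight γ σ m c = glauberWeight γ (glauberStep G σ c) m (swapC G σ c) := by
  unfold glauberWeight
  refine Finset.prod_congr rfl fun v _ => ?_
  by_cases hm : m v
  · simp [hm]
  · by_cases hv : Accept G σ c v
    · simp [glauberStep, swapC, hm, hv, eq_comm]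
    · simp [glauberStep, swapC, hm, hv]

lemma P_symm (γ : ℝ) (hσ : IsProper G σ) (hτ : IsProper G τ) :
    P G q γ σ τ = P G q γ τ σ := by
  unfold P
  refine Finset.sum_congr rfl fun m _ => ?_
  rw [← Finset.sum_filter, ← Finset.sum_filter]
  refine Finset.sum_nbij' (i := fun c => swapC G σ c) (j := fun c => swapC G τ c)
    ?_ ?_ ?_ ?_ ?_
  · intro c hc
    rw [Finset.mem_filter] at hc ⊢
    refine ⟨Finset.mem_univ _, ?_⟩
    have := step_swap hσ c
    rwa [hc.2] at this
  · intro c hc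
    rw [Finset.mem_filter] at hc ⊢
    refine ⟨Finset.mem_univ _, ?_⟩
    have := step_swap hτ c
    rwa [hc.2] at this
  · intro c hc
    rw [Finset.mem_filter] at hc
    have := swap_swap hσ c
    rwa [hc.2] at this
  · intro c hc
    rw [Finset.mem_filter] at hc
    have := swap_swap hτ c
    rwa [hc.2] at this
  · intro c hc
    rw [Finset.mem_filter] at hc
    have := weight_swap (G := G) γ m σ c
    rwa [hc.2] at this

lemma P_zero (γ : ℝ) (hσ : IsProper G σ) (hτ : ¬ IsProper G τ) :
    P G q γ σ τ = 0 := by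
  unfold P
  refine Finset.sum_eq_zero fun m _ => Finset.sum_eq_zero fun c _ => ?_
  rw [if_neg]
  exact fun h => hτ (h ▸ step_proper hσ c)

lemma sum_pi_prod {α : Type*} [Fintype α] [DecidableEq α] (g : V → α → ℝ) :
    ∑ c : V → α, ∏ v, g v (c v) = ∏ v, ∑ k, g v k :=
  (Fintype.prod_sum g).symm

lemma P_rowsum (γ : ℝ) (hq : 0 < q) (σ : V → Fin q) :
    ∑ ρ : V → Fin q, P G q γ σ ρ = 1 := by
  have hqR : (q : ℝ) ≠ 0 := Nat.cast_ne_zero.mpr hq.ne'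
  unfold P
  rw [Finset.sum_comm]
  have key : ∀ m : V → Bool,
      (∑ ρ : V → Fin q, ∑ c : V → Fin q,
        if glauberStep G σ c = ρ then glauberWeight γ σ m c else 0)
      = ∏ v, (if m v then γ else 1 - γ) := by
    intro m
    rw [Finset.sum_comm]
    have h1 : ∀ c : V → Fin q,
        (∑ ρ : V → Fin q, if glauberStep G σ c = ρ then glauberWeight γ σ m c else 0)
        = glauberWeight γ σ m c := by
      intro c
      simp
    rw [Finset.sum_congr rfl fun c _ => h1 c]
    unfold glauberWeight
    rw [sum_pi_prod (fun v k => if m v then γ / (q:ℝ) else if k = σ v then 1 - γ else 0)]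
    refine Finset.prod_congr rfl fun v _ => ?_
    by_cases hm : m v
    · rw [if_pos hm]
      simp only [hm, if_true]
      rw [Finset.sum_const, Finset.card_univ, Fintype.card_fin, nsmul_eq_mul]
      field_simp
    · rw [if_neg hm]
      simp [hm]
  rw [Finset.sum_congr rfl fun m _ => key m]
  rw [sum_pi_prod (fun (_ : V) (b : Bool) => if b then γ else 1 - γ)]
  have hb : ∑ b : Bool, (if b then γ else 1 - γ) = 1 := by
    rw [Fintype.sum_bool]; norm_num
  simp [hb]


end LocalGlauber

open LocalGlauber in
/-- If `q ≥ Δ + 1`, the uniform distribution over the (nonempty) set of proper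
`q`-colorings of `G` is stationary for the Local Glauber dynamics. -/
theorem local_glauber_stationary {V : Type*} [Fintype V] [DecidableEq V]
    (G : SimpleGraph V) (q : ℕ) (γ : ℝ) (hγ0 : 0 < γ) (hγ1 : γ < 1)
    (hq : G.maxDegree + 1 ≤ q) (τ : V → Fin q) :
    ∑ σ : V → Fin q, uniformProper G q σ * P G q γ σ τ = uniformProper G q τ := by
  have hq0 : 0 < q := lt_of_lt_of_le (Nat.succ_pos _) hq
  by_cases hτ : IsProper G τ
  · set N : ℝ := ((univ.filter (fun ρ : V → Fin q => IsProper G ρ)).card : ℝ) with hN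
    calc ∑ σ : V → Fin q, uniformProper G q σ * P G q γ σ τ
        = ∑ σ : V → Fin q, (1/N) * (if IsProper G σ then P G q γ τ σ else 0) := by
          refine Finset.sum_congr rfl fun σ _ => ?_
          unfold uniformProper
          by_cases hσ : IsProper G σ
          · rw [if_pos hσ, if_pos hσ, P_symm γ hσ hτ]
          · rw [if_neg hσ, if_neg hσ, zero_mul, mul_zero]
      _ = (1/N) * ∑ σ : V → Fin q, (if IsProper G σ then P G q γ τ σ else 0) := by
          rw [Finset.mul_sum]
      _ = (1/N) * ∑ σ : V → Fin q, P G q γ τ σ := by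
          congr 1
          refine Finset.sum_congr rfl fun σ _ => ?_
          by_cases hσ : IsProper G σ
          · rw [if_pos hσ]
          · rw [if_neg hσ, P_zero γ hτ hσ]
      _ = 1/N := by rw [P_rowsum γ hq0, mul_one]
      _ = uniformProper G q τ := by rw [uniformProper, if_pos hτ]
  · rw [uniformProper, if_neg hτ]
    refine Finset.sum_eq_zero fun σ _ => ?_
    by_cases hσ : IsProper G σ
    · rw [P_zero γ hσ hτ, mul_zero]
    · rw [uniformProper, if_neg hσ, zero_mul]
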